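/- The assignment h ↦ φ_a(h) defines a bijection from the Apéry set Ap(H, a_n) onto Mon(S/ini_<((x_n)+I(a))), the set of monomials of S not lying in ini_<((x_n)+I(a)) (which form a K-basis of S/ini_<((x_n)+I(a))). -/

import Mathlib

open MvPolynomial

/-- Sum of the exponents of a monomial (its total degree). -/
def degSum {m : ℕ} (u : Fin m →₀ ℕ) : ℕ := ∑ i, u i

/-- The reverse lexicographic order on monomials determined by a ranking permutation `σ`:
`σ i` is the rank of the variable `x i`; the variable of rank `0` is the greatest and the
variable of rank `m-1` is the smallest.  `u < v` iff `deg u < deg v`, or the degrees agree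
and at the differing position of largest rank (i.e. belonging to the smallest variable)
`u` has the larger exponent. -/
def RevLexLt {m : ℕ} (σ : Equiv.Perm (Fin m)) (u v : Fin m →₀ ℕ) : Prop :=
  degSum u < degSum v ∨
    (degSum u = degSum v ∧ ∃ i, v i < u i ∧ ∀ j, σ i < σ j → u j = v j)

/-- Extend a ranking permutation of `Fin m` to `Fin (m+1)` by letting the new
variable (of index `Fin.last m`, playing the role of `x₀`) have the largest rank,
i.e. be the smallest variable. -/
def extPerm {m : ℕ} (σ : Equiv.Perm (Fin m)) : Equiv.Perm (Fin (m + 1)) where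
  toFun := Fin.lastCases (Fin.last m) (fun i => (σ i).castSucc)
  invFun := Fin.lastCases (Fin.last m) (fun i => (σ.symm i).castSucc)
  left_inv := by
    intro x
    induction x using Fin.lastCases with
    | last => simp
    | cast i => simp
  right_inv := by
    intro x
    induction x using Fin.lastCases with
    | last => simp
    | cast i => simp

/-- `u` is the exponent vector of the leading monomial of `f` with respect to the
strict monomial order `lt`. -/
def IsLeadMon {K : Type} [Field K] {m : ℕ} (lt : (Fin m →₀ ℕ) → (Fin m →₀ ℕ) → Prop)
    (f : MvPolynomial (Fin m) K) (u : Fin m →₀ ℕ) : Prop :=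
  MvPolynomial.coeff u f ≠ 0 ∧ ∀ v, MvPolynomial.coeff v f ≠ 0 → v ≠ u → lt v u

/-- The initial ideal of `I` with respect to the monomial order `lt`: the ideal generated by
the leading monomials of the nonzero elements of `I`. -/
noncomputable def iniIdeal {K : Type} [Field K] {m : ℕ} (lt : (Fin m →₀ ℕ) → (Fin m →₀ ℕ) → Prop)
    (I : Ideal (MvPolynomial (Fin m) K)) : Ideal (MvPolynomial (Fin m) K) :=
  Ideal.span {p | ∃ f ∈ I, ∃ u, IsLeadMon lt f u ∧ p = MvPolynomial.monomial u (1 : K)}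

/-- `G` is a (finite) Gröbner basis of `I` w.r.t. `lt`. -/
def IsGB {K : Type} [Field K] {m : ℕ} (lt : (Fin m →₀ ℕ) → (Fin m →₀ ℕ) → Prop)
    (I : Ideal (MvPolynomial (Fin m) K)) (G : Set (MvPolynomial (Fin m) K)) : Prop :=
  G.Finite ∧ G ⊆ (I : Set (MvPolynomial (Fin m) K)) ∧ Ideal.span G = I ∧
    iniIdeal lt I =
      Ideal.span {p | ∃ g ∈ G, ∃ u, IsLeadMon lt g u ∧ p = MvPolynomial.monomial u (1 : K)}

/-- `G` is the reduced Gröbner basis of `I` w.r.t. `lt`: a Gröbner basis consisting of monic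
polynomials such that no monomial occurring in an element of `G` is divisible by the leading
monomial of another element of `G`. -/
def IsReducedGB {K : Type} [Field K] {m : ℕ} (lt : (Fin m →₀ ℕ) → (Fin m →₀ ℕ) → Prop)
    (I : Ideal (MvPolynomial (Fin m) K)) (G : Set (MvPolynomial (Fin m) K)) : Prop :=
  IsGB lt I G ∧
    (∀ g ∈ G, ∃ u, IsLeadMon lt g u ∧ MvPolynomial.coeff u g = 1) ∧
    (∀ g ∈ G, ∀ u, MvPolynomial.coeff u g ≠ 0 →
      ∀ g' ∈ G, g' ≠ g → ∀ v, IsLeadMon lt g' v → ¬ v ≤ u)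

/-- The homogenization `f^h` of a polynomial `f ∈ K[x_1,…,x_m]` with respect to a new
variable `x₀`, which is the variable of index `Fin.last m` in `K[x_1,…,x_m,x₀]`. -/
noncomputable def homogPoly {K : Type} [Field K] {m : ℕ} (f : MvPolynomial (Fin m) K) :
    MvPolynomial (Fin (m + 1)) K :=
  ∑ u ∈ f.support,
    MvPolynomial.monomial
      (Finsupp.mapDomain Fin.castSucc u +
        Finsupp.single (Fin.last m) (f.totalDegree - degSum u))
      (MvPolynomial.coeff u f)

/-- The homogenization of the ideal `I`, generated by the homogenizations of all its
elements. -/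
noncomputable def homogIdeal {K : Type} [Field K] {m : ℕ} (I : Ideal (MvPolynomial (Fin m) K)) :
    Ideal (MvPolynomial (Fin (m + 1)) K) :=
  Ideal.span (homogPoly '' (I : Set (MvPolynomial (Fin m) K)))

/-- The toric ideal `I(a)`: the kernel of the `K`-algebra map `K[x_1,…,x_m] → K[t]`,
`x_i ↦ t^{a_i}`. -/
noncomputable def toricIdeal (K : Type) [Field K] {m : ℕ} (a : Fin m → ℕ) :
    Ideal (MvPolynomial (Fin m) K) :=
  RingHom.ker (MvPolynomial.aeval (fun i => (Polynomial.X : Polynomial K) ^ a i)).toRingHom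

set_option synthInstance.maxHeartbeats 1000000 in
/-- A homogeneous ideal `I` of a polynomial ring `S` over a field is a Cohen-Macaulay ideal
(equivalently, `S/I` is a Cohen-Macaulay ring) iff there is a regular sequence on `S/I`,
consisting of elements of the irrelevant maximal ideal, whose length equals the Krull
dimension of `S/I`. -/
def IsCMIdeal {K : Type} [Field K] {m : ℕ} (I : Ideal (MvPolynomial (Fin m) K)) : Prop :=
  ∃ rs : List (MvPolynomial (Fin m) K),
    (∀ f ∈ rs, f ∈ Ideal.span (Set.range (MvPolynomial.X : Fin m → MvPolynomial (Fin m) K))) ∧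
    RingTheory.Sequence.IsRegular (MvPolynomial (Fin m) K ⧸ I)
      (rs.map (Ideal.Quotient.mk I)) ∧
    (rs.length : WithBot (WithTop ℕ)) = ringKrullDim (MvPolynomial (Fin m) K ⧸ I)

/-- `u` is (the exponent vector of) a minimal monomial generator of the monomial ideal `J`:
the monomial `x^u` lies in `J` but no proper divisor of it does. -/
def IsMinMonGen {K : Type} [Field K] {m : ℕ} (J : Ideal (MvPolynomial (Fin m) K))
    (u : Fin m →₀ ℕ) : Prop :=
  MvPolynomial.monomial u (1 : K) ∈ J ∧
    ∀ v, v ≤ u → v ≠ u → MvPolynomial.monomial v (1 : K) ∉ J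

/-- The dual sequence `a'` of `a`: `a'_i = a_n - a_i` for `i < n` and `a'_n = a_n`. -/
def dualSeq {m : ℕ} (a : Fin (m + 1) → ℕ) : Fin (m + 1) → ℕ :=
  fun i => if i = Fin.last m then a (Fin.last m) else a (Fin.last m) - a i

/-- The involution `σ(w₁,…,w_n) = (w₁,…,w_{n-1}, -(w₁+⋯+w_n))` of `ℤⁿ`. -/
def sigmaMap (m : ℕ) (w : Fin (m + 1) → ℤ) : Fin (m + 1) → ℤ :=
  fun i => if i = Fin.last m then -(∑ j, w j) else w i

/-- The lattice `L(a) = {w ∈ ℤⁿ : ⟨w, a⟩ = 0}` as a set. -/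
def latticeL {m : ℕ} (a : Fin m → ℕ) : Set (Fin m → ℤ) :=
  {w | ∑ i, w i * (a i : ℤ) = 0}

/-- The binomial `f_w = x^{w⁺} - x^{w⁻}` attached to an integer vector `w`. -/
noncomputable def binom (K : Type) [Field K] {m : ℕ} (w : Fin m → ℤ) :
    MvPolynomial (Fin m) K :=
  MvPolynomial.monomial (Finsupp.equivFunOnFinite.symm fun i => (w i).toNat) (1 : K) -
    MvPolynomial.monomial (Finsupp.equivFunOnFinite.symm fun i => (-w i).toNat) (1 : K)

/-- The numerical semigroup (additive submonoid of `ℕ`) generated by the `a_i`. -/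
def semiH {m : ℕ} (a : Fin m → ℕ) : AddSubmonoid ℕ := AddSubmonoid.closure (Set.range a)

/-- The Apéry set `Ap(H, c) = {x ∈ H : x - c ∉ H}`. -/
def apSet {m : ℕ} (a : Fin m → ℕ) (c : ℕ) : Set ℕ :=
  {x | x ∈ semiH a ∧ ¬ ∃ y ∈ semiH a, x = y + c}

/-- The `a`-degree of a monomial: `deg_a(x^u) = ∑ uᵢ aᵢ`. -/
def degA {m : ℕ} (a : Fin m → ℕ) (u : Fin m →₀ ℕ) : ℕ := ∑ i, u i * a i

/-- `u` is the smallest monomial (w.r.t. `lt`) whose `a`-degree equals `h`. -/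
def IsMinMonOfDeg {m : ℕ} (a : Fin m → ℕ) (lt : (Fin m →₀ ℕ) → (Fin m →₀ ℕ) → Prop)
    (h : ℕ) (u : Fin m →₀ ℕ) : Prop :=
  degA a u = h ∧ ∀ v, degA a v = h → v ≠ u → lt u v

/-- The minimal number of generators of an ideal. -/
noncomputable def muI {R : Type} [CommRing R] (I : Ideal R) : ℕ :=
  sInf {k | ∃ s : Finset R, s.card = k ∧ Ideal.span (s : Set R) = I}

/-- `lt` is a monomial order on the monomials of `K[x_1,…,x_m]`: a linear (strict) order
compatible with multiplication and having `1` as smallest monomial. -/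
structure IsMonOrder {m : ℕ} (lt : (Fin m →₀ ℕ) → (Fin m →₀ ℕ) → Prop) : Prop where
  irrefl : ∀ u, ¬ lt u u
  trans : ∀ u v w, lt u v → lt v w → lt u w
  total : ∀ u v, u ≠ v → lt u v ∨ lt v u
  add_right : ∀ u v w, lt u v → lt (u + w) (v + w)
  zero_lt : ∀ u, u ≠ 0 → lt 0 u

lemma revlex_asymm {m : ℕ} (σ : Equiv.Perm (Fin m)) {u v : Fin m →₀ ℕ}
    (h1 : RevLexLt σ u v) (h2 : RevLexLt σ v u) : False := by
  rcases h1 with h1 | ⟨hd1, i, hi, hri⟩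
  · rcases h2 with h2 | ⟨hd2, _⟩ <;> omega
  · rcases h2 with h2 | ⟨hd2, k, hk, hrk⟩
    · omega
    · rcases lt_trichotomy (σ i) (σ k) with h | h | h
      · exact absurd (hri k h) (by omega)
      · have : i = k := σ.injective (Fin.ext (by omega))
        subst this; omega
      · exact absurd (hrk i h) (by omega)

lemma degSum_add {m : ℕ} (u v : Fin m →₀ ℕ) : degSum (u + v) = degSum u + degSum v := by
  simp [degSum, Finsupp.add_apply, Finset.sum_add_distrib]

lemma revlex_add_right {m : ℕ} (σ : Equiv.Perm (Fin m)) {u v : Fin m →₀ ℕ}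
    (w : Fin m →₀ ℕ) (h : RevLexLt σ u v) : RevLexLt σ (u + w) (v + w) := by
  rcases h with h | ⟨hd, i, hi, hr⟩
  · left; simp [degSum_add]; omega
  · right
    refine ⟨by simp [degSum_add, hd], i, ?_, fun j hj => ?_⟩
    · simp [Finsupp.add_apply]; omega
    · have := hr j hj
      simp [Finsupp.add_apply, this]

lemma degA_add {m : ℕ} (a : Fin m → ℕ) (u v : Fin m →₀ ℕ) :
    degA a (u + v) = degA a u + degA a v := by
  simp [degA, Finsupp.add_apply, add_mul, Finset.sum_add_distrib]

lemma degA_single {m : ℕ} (a : Fin m → ℕ) (i : Fin m) (k : ℕ) :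
    degA a (Finsupp.single i k) = k * a i := by
  rw [degA, Finset.sum_eq_single i]
  · simp
  · intro j _ hj; simp [Finsupp.single_apply, Ne.symm hj]
  · simp

lemma degA_mem {m : ℕ} (a : Fin m → ℕ) (u : Fin m →₀ ℕ) : degA a u ∈ semiH a := by
  refine AddSubmonoid.sum_mem _ (fun i _ => ?_)
  rw [← smul_eq_mul]
  exact AddSubmonoid.nsmul_mem _ (AddSubmonoid.subset_closure (Set.mem_range_self i)) (u i)

lemma exists_degA {m : ℕ} (a : Fin m → ℕ) {y : ℕ} (hy : y ∈ semiH a) :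
    ∃ w : Fin m →₀ ℕ, degA a w = y := by
  induction hy using AddSubmonoid.closure_induction with
  | mem x hx => obtain ⟨i, rfl⟩ := hx; exact ⟨Finsupp.single i 1, by simp [degA_single]⟩
  | zero => exact ⟨0, by simp [degA]⟩
  | add x y _ _ hx hy =>
      obtain ⟨w1, rfl⟩ := hx; obtain ⟨w2, rfl⟩ := hy
      exact ⟨w1 + w2, degA_add a w1 w2⟩

lemma aeval_monomial_pow {K : Type} [Field K] {m : ℕ} (a : Fin m → ℕ) (u : Fin m →₀ ℕ)
    (c : K) :
    aeval (fun i => (Polynomial.X : Polynomial K) ^ a i) (monomial u c) =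
      Polynomial.C c * Polynomial.X ^ degA a u := by
  rw [aeval_monomial]
  congr 1
  rw [Finsupp.prod]
  have h1 : ∀ i ∈ u.support, ((Polynomial.X : Polynomial K) ^ a i) ^ u i
      = (Polynomial.X : Polynomial K) ^ (u i * a i) := by
    intro i _; rw [← pow_mul, mul_comm]
  rw [Finset.prod_congr rfl h1, Finset.prod_pow_eq_pow_sum]
  congr 1
  rw [degA]
  exact Finset.sum_subset (Finset.subset_univ _)
    (fun i _ hi => by rw [Finsupp.notMem_support_iff.mp hi, zero_mul])

lemma coeff_aeval {K : Type} [Field K] {m : ℕ} (a : Fin m → ℕ) (f : MvPolynomial (Fin m) K)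
    (e : ℕ) :
    (aeval (fun i => (Polynomial.X : Polynomial K) ^ a i) f).coeff e =
      ∑ w ∈ f.support.filter (fun w => degA a w = e), coeff w f := by
  conv_lhs => rw [f.as_sum]
  rw [map_sum, Polynomial.finset_sum_coeff, Finset.sum_filter]
  refine Finset.sum_congr rfl fun w _ => ?_
  rw [aeval_monomial_pow, Polynomial.coeff_C_mul, Polynomial.coeff_X_pow]
  by_cases h : degA a w = e
  · simp [h]
  · rw [if_neg (fun h' => h h'.symm), mul_zero, if_neg h]

lemma exists_of_coeff_aeval_ne {K : Type} [Field K] {m : ℕ} (a : Fin m → ℕ)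
    {f : MvPolynomial (Fin m) K} {e : ℕ}
    (h : (aeval (fun i => (Polynomial.X : Polynomial K) ^ a i) f).coeff e ≠ 0) :
    ∃ w, coeff w f ≠ 0 ∧ degA a w = e := by
  rw [coeff_aeval] at h
  obtain ⟨w, hw, hc⟩ := Finset.exists_ne_zero_of_sum_ne_zero h
  exact ⟨w, hc, (Finset.mem_filter.mp hw).2⟩

lemma binom_mem_toric {K : Type} [Field K] {m : ℕ} (a : Fin m → ℕ) {u v : Fin m →₀ ℕ}
    (h : degA a u = degA a v) :
    monomial u (1 : K) - monomial v 1 ∈ toricIdeal K a := by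
  rw [toricIdeal, RingHom.mem_ker]
  simp only [AlgHom.toRingHom_eq_coe, RingHom.coe_coe, map_sub, aeval_monomial_pow, h, sub_self]

lemma coeff_in_sup {K : Type} [Field K] {m : ℕ} (a : Fin (m + 1) → ℕ)
    {f : MvPolynomial (Fin (m + 1)) K}
    (hf : f ∈ Ideal.span {(X (Fin.last m) : MvPolynomial (Fin (m + 1)) K)} ⊔ toricIdeal K a)
    {e : ℕ}
    (he : (aeval (fun i => (Polynomial.X : Polynomial K) ^ a i) f).coeff e ≠ 0) :
    ∃ y ∈ semiH a, e = y + a (Fin.last m) := by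
  obtain ⟨q, hq, r, hr, rfl⟩ := Submodule.mem_sup.mp hf
  rw [map_add] at he
  have hr0 : aeval (fun i => (Polynomial.X : Polynomial K) ^ a i) r = 0 := by
    rw [toricIdeal, RingHom.mem_ker] at hr
    simpa using hr
  rw [hr0, add_zero] at he
  obtain ⟨g, rfl⟩ := Ideal.mem_span_singleton.mp hq
  rw [map_mul, aeval_X, mul_comm, Polynomial.coeff_mul_X_pow'] at he
  split_ifs at he with hle
  · obtain ⟨w, _, hw⟩ := exists_of_coeff_aeval_ne a he
    exact ⟨degA a w, degA_mem a w, by omega⟩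
  · exact absurd rfl he

lemma leadmon_monomial {K : Type} [Field K] {m : ℕ}
    (lt : (Fin m →₀ ℕ) → (Fin m →₀ ℕ) → Prop) (u : Fin m →₀ ℕ) :
    IsLeadMon lt (monomial u (1 : K)) u := by
  constructor
  · simp [coeff_monomial]
  · intro v hv hvu
    rw [coeff_monomial, if_neg (fun h => hvu h.symm)] at hv
    exact absurd rfl hv

lemma leadmon_binom {K : Type} [Field K] {m : ℕ}
    {lt : (Fin m →₀ ℕ) → (Fin m →₀ ℕ) → Prop} {u v : Fin m →₀ ℕ}
    (huv : v ≠ u) (hlt : lt v u) :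
    IsLeadMon lt (monomial u (1 : K) - monomial v 1) u := by
  constructor
  · rw [coeff_sub, coeff_monomial, coeff_monomial, if_pos rfl, if_neg huv]
    simp
  · intro z hz hzu
    rw [coeff_sub, coeff_monomial, coeff_monomial, if_neg (fun h => hzu h.symm)] at hz
    by_cases h : v = z
    · subst h; exact hlt
    · rw [if_neg h] at hz; simp at hz

lemma mem_ini_of_lead {K : Type} [Field K] {m : ℕ}
    {lt : (Fin m →₀ ℕ) → (Fin m →₀ ℕ) → Prop} {I : Ideal (MvPolynomial (Fin m) K)}
    {f : MvPolynomial (Fin m) K} {u : Fin m →₀ ℕ}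
    (hf : f ∈ I) (h : IsLeadMon lt f u) :
    monomial u (1 : K) ∈ iniIdeal lt I :=
  Ideal.subset_span ⟨f, hf, u, h, rfl⟩

lemma mem_ini_elim {K : Type} [Field K] {m : ℕ}
    {lt : (Fin m →₀ ℕ) → (Fin m →₀ ℕ) → Prop} {I : Ideal (MvPolynomial (Fin m) K)}
    {u : Fin m →₀ ℕ}
    (h : monomial u (1 : K) ∈ iniIdeal lt I) :
    ∃ f ∈ I, ∃ v, IsLeadMon lt f v ∧ v ≤ u := by
  have key : ∀ z, coeff z (monomial u (1 : K)) ≠ 0 →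
      ∃ f ∈ I, ∃ v, IsLeadMon lt f v ∧ v ≤ z := by
    refine Submodule.span_induction ?_ ?_ ?_ ?_ h
    · rintro x ⟨f, hf, v, hlm, rfl⟩ z hz
      rw [coeff_monomial] at hz
      split_ifs at hz with hvz
      · exact ⟨f, hf, v, hlm, hvz ▸ le_rfl⟩
      · exact absurd rfl hz
    · intro z hz; simp at hz
    · intro x y _ _ hx hy z hz
      rw [coeff_add] at hz
      by_cases h1 : coeff z x = 0
      · exact hy z (by rw [h1, zero_add] at hz; exact hz)
      · exact hx z h1
    · intro r x _ hx z hz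
      rw [smul_eq_mul, coeff_mul] at hz
      obtain ⟨p, hp, hc⟩ := Finset.exists_ne_zero_of_sum_ne_zero hz
      have h2 : coeff p.2 x ≠ 0 := fun h0 => hc (by rw [h0, mul_zero])
      obtain ⟨f, hf, v, hlm, hv⟩ := hx p.2 h2
      have hpz : p.2 ≤ z := by
        rw [Finset.HasAntidiagonal.mem_antidiagonal] at hp
        exact hp ▸ le_add_self
      exact ⟨f, hf, v, hlm, hv.trans hpz⟩
  exact key u (by simp [coeff_monomial])

lemma leadmon_mul_monomial {K : Type} [Field K] {m : ℕ} (σ : Equiv.Perm (Fin m))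
    {f : MvPolynomial (Fin m) K} {v : Fin m →₀ ℕ} (w : Fin m →₀ ℕ)
    (h : IsLeadMon (RevLexLt σ) f v) :
    IsLeadMon (RevLexLt σ) (f * monomial w (1 : K)) (v + w) := by
  constructor
  · rw [coeff_mul_monomial', if_pos le_add_self, add_tsub_cancel_right, mul_one]
    exact h.1
  · intro z hz hzvw
    rw [coeff_mul_monomial'] at hz
    split_ifs at hz with hwz
    · rw [mul_one] at hz
      have hne : z - w ≠ v := by
        intro h0
        exact hzvw (by rw [← h0, tsub_add_cancel_of_le hwz])
      have := h.2 _ hz hne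
      have h3 := revlex_add_right σ w this
      rwa [tsub_add_cancel_of_le hwz] at h3
    · exact absurd rfl hz

lemma not_mem_ini {K : Type} [Field K] {n : ℕ} (a : Fin (n + 1) → ℕ)
    (σ : Equiv.Perm (Fin (n + 1))) {u : Fin (n + 1) →₀ ℕ}
    (hap : degA a u ∈ apSet a (a (Fin.last n)))
    (hmin : ∀ v, degA a v = degA a u → v ≠ u → RevLexLt σ u v) :
    monomial u (1 : K) ∉ iniIdeal (RevLexLt σ)
      (Ideal.span {(X (Fin.last n) : MvPolynomial (Fin (n + 1)) K)} ⊔ toricIdeal K a) := by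
  intro h
  obtain ⟨f, hfJ, v, hlm, hvu⟩ := mem_ini_elim h
  set f' := f * monomial (u - v) (1 : K) with hf'
  have hf'J : f' ∈ Ideal.span {(X (Fin.last n) : MvPolynomial (Fin (n + 1)) K)} ⊔
      toricIdeal K a := Ideal.mul_mem_right _ _ hfJ
  have hlm' : IsLeadMon (RevLexLt σ) f' u := by
    have := leadmon_mul_monomial σ (u - v) hlm
    rwa [add_tsub_cancel_of_le hvu] at this
  by_cases hc : (aeval (fun i => (Polynomial.X : Polynomial K) ^ a i) f').coeff (degA a u) = 0
  · rw [coeff_aeval] at hc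
    have hu_mem : u ∈ f'.support.filter (fun w => degA a w = degA a u) :=
      Finset.mem_filter.mpr ⟨mem_support_iff.mpr hlm'.1, rfl⟩
    by_cases hz : ∃ z ∈ f'.support.filter (fun w => degA a w = degA a u), z ≠ u
    · obtain ⟨z, hzf, hzu⟩ := hz
      have hz2 := Finset.mem_filter.mp hzf
      have hlt1 := hlm'.2 z (mem_support_iff.mp hz2.1) hzu
      have hlt2 := hmin z hz2.2 hzu
      exact revlex_asymm σ hlt1 hlt2
    · push_neg at hz
      have hsing : f'.support.filter (fun w => degA a w = degA a u) = {u} :=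
        Finset.eq_singleton_iff_unique_mem.mpr ⟨hu_mem, hz⟩
      rw [hsing, Finset.sum_singleton] at hc
      exact hlm'.1 hc
  · obtain ⟨y, hy, hey⟩ := coeff_in_sup a hf'J hc
    exact hap.2 ⟨y, hy, hey⟩

lemma mem_ini_of_deg_notap {K : Type} [Field K] {n : ℕ} (a : Fin (n + 1) → ℕ)
    (σ : Equiv.Perm (Fin (n + 1))) {u : Fin (n + 1) →₀ ℕ}
    (h : ∃ y ∈ semiH a, degA a u = y + a (Fin.last n)) :
    monomial u (1 : K) ∈ iniIdeal (RevLexLt σ)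
      (Ideal.span {(X (Fin.last n) : MvPolynomial (Fin (n + 1)) K)} ⊔ toricIdeal K a) := by
  obtain ⟨y, hy, hdeg⟩ := h
  obtain ⟨w, rfl⟩ := exists_degA a hy
  have hdv : degA a u = degA a (w + Finsupp.single (Fin.last n) 1) := by
    rw [degA_add, degA_single]; omega
  have hmem : monomial u (1 : K) ∈
      Ideal.span {(X (Fin.last n) : MvPolynomial (Fin (n + 1)) K)} ⊔ toricIdeal K a := by
    have h1 : monomial u (1 : K) - monomial (w + Finsupp.single (Fin.last n) 1) 1 ∈
        toricIdeal K a := binom_mem_toric a hdv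
    have h2 : monomial (w + Finsupp.single (Fin.last n) 1) (1 : K) ∈
        Ideal.span {(X (Fin.last n) : MvPolynomial (Fin (n + 1)) K)} := by
      rw [Ideal.mem_span_singleton]
      refine ⟨monomial w 1, ?_⟩
      rw [X, monomial_mul, one_mul]
      exact congrArg (fun t => monomial t (1 : K)) (add_comm w _)
    have := add_mem (Ideal.mem_sup_right h1) (Ideal.mem_sup_left h2)
    simpa using this
  exact mem_ini_of_lead hmem (leadmon_monomial _ u)

lemma mem_ini_of_notmin {K : Type} [Field K] {n : ℕ} (a : Fin (n + 1) → ℕ)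
    (σ : Equiv.Perm (Fin (n + 1))) {u v : Fin (n + 1) →₀ ℕ}
    (hdeg : degA a v = degA a u) (hne : v ≠ u) (hlt : RevLexLt σ v u) :
    monomial u (1 : K) ∈ iniIdeal (RevLexLt σ)
      (Ideal.span {(X (Fin.last n) : MvPolynomial (Fin (n + 1)) K)} ⊔ toricIdeal K a) :=
  mem_ini_of_lead (Ideal.mem_sup_right (binom_mem_toric a hdeg.symm))
    (leadmon_binom hne hlt)


/-- The assignment `h ↦ φ_a(h)` is a bijection from `Ap(H, a_n)` onto the set of monomials
not lying in `ini_<((x_n) + I(a))`. -/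
theorem stmt11 {K : Type} [Field K] {n : ℕ}
    (a : Fin (n + 1) → ℕ) (ha_inj : Function.Injective a) (ha_pos : ∀ i, 0 < a i)
    (ha_gcd : Finset.univ.gcd a = 1)
    (ha_lt : ∀ i, i ≠ Fin.last n → a i < a (Fin.last n))
    (σ : Equiv.Perm (Fin (n + 1))) (hσ : σ (Fin.last n) = Fin.last n)
    (φ : ℕ → (Fin (n + 1) →₀ ℕ))
    (hφ : ∀ h ∈ apSet a (a (Fin.last n)), IsMinMonOfDeg a (RevLexLt σ) h (φ h)) :
    Set.BijOn φ (apSet a (a (Fin.last n)))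
      {u : Fin (n + 1) →₀ ℕ |
        MvPolynomial.monomial u (1 : K) ∉
          iniIdeal (RevLexLt σ)
            (Ideal.span {(MvPolynomial.X (Fin.last n) : MvPolynomial (Fin (n + 1)) K)} ⊔
              toricIdeal K a)} := by
  refine ⟨?_, ?_, ?_⟩
  · intro h hh
    obtain ⟨hdeg, hmin⟩ := hφ h hh
    simp only [Set.mem_setOf_eq]
    exact not_mem_ini a σ (by rw [hdeg]; exact hh)
      (fun v hv hne => hmin v (by rw [hv, hdeg]) hne)
  · intro h1 h1m h2 h2m heq
    rw [← (hφ h1 h1m).1, ← (hφ h2 h2m).1, heq]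
  · intro u hu
    simp only [Set.mem_setOf_eq] at hu
    have hap : degA a u ∈ apSet a (a (Fin.last n)) :=
      ⟨degA_mem a u, fun hex => hu (mem_ini_of_deg_notap a σ hex)⟩
    obtain ⟨hdeg, hmin⟩ := hφ _ hap
    have heq : φ (degA a u) = u := by
      by_contra hne
      exact hu (mem_ini_of_notmin a σ hdeg hne (hmin u rfl (fun h => hne h.symm)))
    exact ⟨degA a u, hap, heq⟩
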